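/- Let B, C ∈ B(H). Then w([[0, B], [C, 0]])² ≥ (1/8)·[ max{ ‖B + C*‖², ‖B − C*‖² } + ‖B + C*‖·‖B − C*‖ ] ≥ (1/4)·max{ ‖|B|² + |C*|²‖, ‖|B*|² + |C|²‖ }. -/

import Mathlib

open ContinuousLinearMap

variable {H : Type*} [NormedAddCommGroup H] [InnerProductSpace ℂ H] [CompleteSpace H]

/-- The numerical radius of a bounded linear operator:
`w(T) = sup { |⟨Tx, x⟩| : ‖x‖ = 1 }`. -/
noncomputable def numRadius {E : Type*} [NormedAddCommGroup E] [InnerProductSpace ℂ E]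
    (T : E →L[ℂ] E) : ℝ :=
  sSup {r : ℝ | ∃ x : E, ‖x‖ = 1 ∧ r = ‖(inner ℂ (T x) x : ℂ)‖}

/-- The absolute value `|T| = (T*T)^(1/2)` of a bounded linear operator.
Note `opAbs (adjoint T) = (T T*)^(1/2) = |T*|`. -/
noncomputable def opAbs (T : H →L[ℂ] H) : H →L[ℂ] H := CFC.sqrt (adjoint T * T)

/-- The off-diagonal operator matrix `[[0, B], [C, 0]]` acting on `H ⊕ H`
(with the Hilbert space structure `WithLp 2 (H × H)`) by `(x₁, x₂) ↦ (B x₂, C x₁)`. -/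
noncomputable def offDiag (B C : H →L[ℂ] H) :
    WithLp 2 (H × H) →L[ℂ] WithLp 2 (H × H) :=
  ((WithLp.prodContinuousLinearEquiv 2 ℂ H H).symm : (H × H) →L[ℂ] WithLp 2 (H × H)).comp
    (((B.comp (ContinuousLinearMap.snd ℂ H H)).prod
        (C.comp (ContinuousLinearMap.fst ℂ H H))).comp
      ((WithLp.prodContinuousLinearEquiv 2 ℂ H H) : WithLp 2 (H × H) →L[ℂ] H × H))

section Aux

set_option linter.unusedSectionVars false

lemma numRadius_bddAbove' {E : Type*} [NormedAddCommGroup E] [InnerProductSpace ℂ E]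
    (T : E →L[ℂ] E) :
    BddAbove {r : ℝ | ∃ x : E, ‖x‖ = 1 ∧ r = ‖(inner ℂ (T x) x : ℂ)‖} := by
  refine ⟨‖T‖, ?_⟩
  rintro r ⟨x, hx, rfl⟩
  calc ‖(inner ℂ (T x) x : ℂ)‖ ≤ ‖T x‖ * ‖x‖ := norm_inner_le_norm _ _
    _ ≤ ‖T‖ * ‖x‖ * ‖x‖ := by
        gcongr
        exact T.le_opNorm x
    _ = ‖T‖ := by rw [hx]; ring

lemma le_numRadius' {E : Type*} [NormedAddCommGroup E] [InnerProductSpace ℂ E]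
    (T : E →L[ℂ] E) {x : E} (hx : ‖x‖ = 1) :
    ‖(inner ℂ (T x) x : ℂ)‖ ≤ numRadius T :=
  le_csSup (numRadius_bddAbove' T) ⟨x, hx, rfl⟩

lemma numRadius_nonneg' {E : Type*} [NormedAddCommGroup E] [InnerProductSpace ℂ E]
    (T : E →L[ℂ] E) : 0 ≤ numRadius T := by
  rcases Set.eq_empty_or_nonempty
      {r : ℝ | ∃ x : E, ‖x‖ = 1 ∧ r = ‖(inner ℂ (T x) x : ℂ)‖} with h | h
  · rw [numRadius, h, Real.sSup_empty]
  · obtain ⟨r, x, hx, rfl⟩ := h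
    exact le_trans (norm_nonneg _) (le_numRadius' T hx)

lemma exists_unit_mul' (s : ℂ) : ∃ c : ℂ, ‖c‖ = 1 ∧ c * s = (‖s‖ : ℂ) := by
  rcases eq_or_ne s 0 with rfl | hs
  · exact ⟨1, by simp, by simp⟩
  · have hn : (‖s‖ : ℝ) ≠ 0 := norm_ne_zero_iff.mpr hs
    refine ⟨(‖s‖ : ℂ)⁻¹ * (starRingEnd ℂ) s, ?_, ?_⟩
    · rw [norm_mul, norm_inv, Complex.norm_real, Real.norm_eq_abs,
        abs_of_nonneg (norm_nonneg s), RCLike.norm_conj, inv_mul_cancel₀ hn]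
    · have hn' : ((‖s‖ : ℝ) : ℂ) ≠ 0 := by exact_mod_cast hn
      rw [mul_assoc, RCLike.conj_mul, sq]
      exact inv_mul_cancel_left₀ hn' _

lemma opNorm_le_of_inner' (A : H →L[ℂ] H) {M : ℝ} (hM : 0 ≤ M)
    (h : ∀ u v : H, ‖u‖ = 1 → ‖v‖ = 1 → ‖(inner ℂ (A v) u : ℂ)‖ ≤ M) : ‖A‖ ≤ M := by
  refine A.opNorm_le_bound hM fun v => ?_
  rcases eq_or_ne v 0 with rfl | hv
  · simp
  have hvn : ‖v‖ ≠ 0 := norm_ne_zero_iff.mpr hv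
  set v' := ‖v‖⁻¹ • v with hv'
  have hv'1 : ‖v'‖ = 1 := by
    rw [hv', norm_smul, norm_inv, norm_norm, inv_mul_cancel₀ hvn]
  have hAv : A v = ‖v‖ • A v' := by
    rw [hv', A.map_smul_of_tower, smul_smul, mul_inv_cancel₀ hvn, one_smul]
  rcases eq_or_ne (A v') 0 with h0 | h0
  · rw [hAv, h0, smul_zero, norm_zero]
    positivity
  have hAn : ‖A v'‖ ≠ 0 := norm_ne_zero_iff.mpr h0
  set u := ‖A v'‖⁻¹ • A v' with hu
  have hu1 : ‖u‖ = 1 := by rw [hu, norm_smul, norm_inv, norm_norm, inv_mul_cancel₀ hAn]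
  have hb := h u v' hu1 hv'1
  have hi : (inner ℂ (A v') u : ℂ) = ((‖A v'‖ : ℝ) : ℂ) := by
    rw [hu]
    have hAn' : ((‖A v'‖ : ℝ) : ℂ) ≠ 0 := by exact_mod_cast hAn
    have : ((‖A v'‖⁻¹ : ℝ) • A v' : H) = (((‖A v'‖ : ℝ) : ℂ))⁻¹ • A v' := by
      rw [← Complex.coe_smul]
      norm_num
    rw [this, inner_smul_right, inner_self_eq_norm_sq_to_K, sq]
    exact inv_mul_cancel_left₀ hAn' _
  rw [hi] at hb
  simp only [Complex.norm_real, Real.norm_eq_abs, abs_of_nonneg (norm_nonneg _)] at hb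
  rw [hAv, norm_smul, norm_norm]
  calc ‖v‖ * ‖A v'‖ ≤ ‖v‖ * M := by gcongr
    _ = M * ‖v‖ := mul_comm _ _

lemma key_inner' (B C : H →L[ℂ] H) (u v : H) (hu : ‖u‖ = 1) (hv : ‖v‖ = 1) (φ : ℂ)
    (hφ : ‖φ‖ = 1) :
    ‖(starRingEnd ℂ) φ * (inner ℂ (B v) u : ℂ) + φ * (starRingEnd ℂ) (inner ℂ ((adjoint C) v) u : ℂ)‖
      ≤ 2 * numRadius (offDiag B C) := by
  set T := offDiag B C with hT
  set w : WithLp 2 (H × H) := (WithLp.prodContinuousLinearEquiv 2 ℂ H H).symm (u, φ • v) with hw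
  set z : WithLp 2 (H × H) := ((Real.sqrt 2 : ℂ))⁻¹ • w with hz
  have h2 : (0:ℝ) < Real.sqrt 2 := by positivity
  have hwfst : w.fst = u := rfl
  have hwsnd : w.snd = φ • v := rfl
  have hwnorm : ‖w‖ = Real.sqrt 2 := by
    rw [WithLp.prod_norm_eq_of_L2, hwfst, hwsnd, norm_smul, hu, hv, hφ]
    norm_num
  have hznorm : ‖z‖ = 1 := by
    rw [hz, norm_smul, hwnorm]
    simp only [norm_inv, Complex.norm_real, Real.norm_eq_abs, abs_of_pos h2]
    exact inv_mul_cancel₀ h2.ne'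
  have hTw : T w = (WithLp.prodContinuousLinearEquiv 2 ℂ H H).symm (φ • B v, C u) := by
    rw [hT, offDiag]
    simp [hw]
  have hTwfst : (T w).fst = φ • B v := by rw [hTw]; rfl
  have hTwsnd : (T w).snd = C u := by rw [hTw]; rfl
  have hCu : (inner ℂ (C u) v : ℂ) = (starRingEnd ℂ) (inner ℂ ((adjoint C) v) u : ℂ) := by
    rw [adjoint_inner_left, ← inner_conj_symm]
  have hinner : (inner ℂ (T z) z : ℂ)
      = (2:ℂ)⁻¹ * ((starRingEnd ℂ) φ * (inner ℂ (B v) u : ℂ)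
          + φ * (starRingEnd ℂ) (inner ℂ ((adjoint C) v) u : ℂ)) := by
    rw [hz, map_smul, inner_smul_left, inner_smul_right, WithLp.prod_inner_apply,
      WithLp.ofLp_fst, WithLp.ofLp_snd, WithLp.ofLp_fst, WithLp.ofLp_snd, hTwfst, hTwsnd, hwfst, hwsnd, inner_smul_left, inner_smul_right, hCu]
    have : (starRingEnd ℂ) ((Real.sqrt 2 : ℂ))⁻¹ * ((Real.sqrt 2 : ℂ))⁻¹ = (2:ℂ)⁻¹ := by
      rw [map_inv₀, Complex.conj_ofReal, ← mul_inv, ← Complex.ofReal_mul,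
        Real.mul_self_sqrt (by norm_num)]
      norm_num
    rw [← mul_assoc, this]
  have hle := le_numRadius' T hznorm
  rw [hinner, norm_mul] at hle
  simp only [norm_inv, Complex.norm_ofNat] at hle
  linarith

lemma bound_add' (B C : H →L[ℂ] H) {u v : H} (hu : ‖u‖ = 1) (hv : ‖v‖ = 1) :
    ‖(inner ℂ ((B + adjoint C) v) u : ℂ)‖ ≤ 2 * numRadius (offDiag B C) := by
  set a : ℂ := inner ℂ (B v) u with ha
  set b : ℂ := inner ℂ ((adjoint C) v) u with hb
  have hs : (inner ℂ ((B + adjoint C) v) u : ℂ) = a + b := by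
    rw [ha, hb, ContinuousLinearMap.add_apply, inner_add_left]
  obtain ⟨c, hc1, hc2⟩ := exists_unit_mul' (a + b)
  have hkey := key_inner' B C u v hu hv ((starRingEnd ℂ) c)
    (by rw [RCLike.norm_conj]; exact hc1)
  rw [Complex.conj_conj] at hkey
  have h4 : (c * (a + b)).re = (c * a + (starRingEnd ℂ) c * (starRingEnd ℂ) b).re := by
    have hcb : (starRingEnd ℂ) c * (starRingEnd ℂ) b = (starRingEnd ℂ) (c * b) :=
      (map_mul _ _ _).symm
    rw [hcb, mul_add, Complex.add_re, Complex.add_re, Complex.conj_re]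
  rw [hs]
  calc ‖a + b‖ = (c * (a + b)).re := by rw [hc2, Complex.ofReal_re]
    _ = (c * a + (starRingEnd ℂ) c * (starRingEnd ℂ) b).re := h4
    _ ≤ ‖c * a + (starRingEnd ℂ) c * (starRingEnd ℂ) b‖ := by
        exact Complex.re_le_norm _
    _ ≤ 2 * numRadius (offDiag B C) := hkey

lemma bound_sub' (B C : H →L[ℂ] H) {u v : H} (hu : ‖u‖ = 1) (hv : ‖v‖ = 1) :
    ‖(inner ℂ ((B - adjoint C) v) u : ℂ)‖ ≤ 2 * numRadius (offDiag B C) := by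
  set a : ℂ := inner ℂ (B v) u with ha
  set b : ℂ := inner ℂ ((adjoint C) v) u with hb
  have hs : (inner ℂ ((B - adjoint C) v) u : ℂ) = a - b := by
    rw [ha, hb, ContinuousLinearMap.sub_apply, inner_sub_left]
  obtain ⟨c', hc1, hc2⟩ := exists_unit_mul' (a - b)
  set c : ℂ := Complex.I * c' with hc
  have hcnorm : ‖c‖ = 1 := by rw [hc, norm_mul, Complex.norm_I, one_mul, hc1]
  have hkey := key_inner' B C u v hu hv ((starRingEnd ℂ) c)
    (by rw [RCLike.norm_conj]; exact hcnorm)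
  rw [Complex.conj_conj] at hkey
  have h4 : (c * a + (starRingEnd ℂ) c * (starRingEnd ℂ) b).im = (c * (a - b)).im := by
    have hcb : (starRingEnd ℂ) c * (starRingEnd ℂ) b = (starRingEnd ℂ) (c * b) :=
      (map_mul _ _ _).symm
    rw [hcb, mul_sub, Complex.sub_im, Complex.add_im, Complex.conj_im]
    ring
  have h5 : (c * (a - b)).im = ‖a - b‖ := by
    rw [hc, mul_assoc, hc2, Complex.mul_im, Complex.I_re, Complex.I_im,
      Complex.ofReal_re, Complex.ofReal_im]
    ring
  rw [hs]
  calc ‖a - b‖ = (c * a + (starRingEnd ℂ) c * (starRingEnd ℂ) b).im := by rw [h4, h5]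
    _ ≤ ‖c * a + (starRingEnd ℂ) c * (starRingEnd ℂ) b‖ := by
        exact le_trans (le_abs_self _) (Complex.abs_im_le_norm _)
    _ ≤ 2 * numRadius (offDiag B C) := hkey

end Aux

lemma ring_id1 {R : Type*} [Ring R] (b b' c c' : R) :
    (b' * b + c * c') + (b' * b + c * c')
      = (b' + c) * (b + c') + (b' - c) * (b - c') := by noncomm_ring

lemma ring_id2 {R : Type*} [Ring R] (b b' c c' : R) :
    (b * b' + c' * c) + (b * b' + c' * c)
      = (b + c') * (b' + c) + (b - c') * (b' - c) := by noncomm_ring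

set_option maxHeartbeats 1000000 in
theorem stmt_7 (B C : H →L[ℂ] H) :
    (1 / 8) * (max (‖B + adjoint C‖ ^ 2) (‖B - adjoint C‖ ^ 2) +
        ‖B + adjoint C‖ * ‖B - adjoint C‖) ≤ numRadius (offDiag B C) ^ 2 ∧
    (1 / 4) * max ‖opAbs B ^ 2 + opAbs (adjoint C) ^ 2‖ ‖opAbs (adjoint B) ^ 2 + opAbs C ^ 2‖ ≤
      (1 / 8) * (max (‖B + adjoint C‖ ^ 2) (‖B - adjoint C‖ ^ 2) +
        ‖B + adjoint C‖ * ‖B - adjoint C‖) := by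
  have hw0 : 0 ≤ numRadius (offDiag B C) := numRadius_nonneg' _
  have ha : ‖B + adjoint C‖ ≤ 2 * numRadius (offDiag B C) :=
    opNorm_le_of_inner' _ (by linarith) (fun u v hu hv => bound_add' B C hu hv)
  have hb : ‖B - adjoint C‖ ≤ 2 * numRadius (offDiag B C) :=
    opNorm_le_of_inner' _ (by linarith) (fun u v hu hv => bound_sub' B C hu hv)
  have ha0 : (0:ℝ) ≤ ‖B + adjoint C‖ := norm_nonneg _
  have hb0 : (0:ℝ) ≤ ‖B - adjoint C‖ := norm_nonneg _
  constructor
  · rcases max_cases (‖B + adjoint C‖ ^ 2) (‖B - adjoint C‖ ^ 2) with ⟨h, h'⟩ | ⟨h, h'⟩ <;>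
      rw [h] <;> nlinarith
  · have habs : ∀ T : H →L[ℂ] H, opAbs T ^ 2 = adjoint T * T := fun T =>
      CFC.sq_sqrt _ (by rw [← star_eq_adjoint]; exact star_mul_self_nonneg T)
    have hX : opAbs B ^ 2 + opAbs (adjoint C) ^ 2 = adjoint B * B + C * adjoint C := by
      rw [habs, habs, adjoint_adjoint]
    have hY : opAbs (adjoint B) ^ 2 + opAbs C ^ 2 = B * adjoint B + adjoint C * C := by
      rw [habs, habs, adjoint_adjoint]
    have hXsum : (adjoint B * B + C * adjoint C) + (adjoint B * B + C * adjoint C)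
        = adjoint (B + adjoint C) * (B + adjoint C)
          + adjoint (B - adjoint C) * (B - adjoint C) := by
      rw [map_add, map_sub, adjoint_adjoint]
      exact ring_id1 B (adjoint B) C (adjoint C)
    have hYsum : (B * adjoint B + adjoint C * C) + (B * adjoint B + adjoint C * C)
        = (B + adjoint C) * adjoint (B + adjoint C)
          + (B - adjoint C) * adjoint (B - adjoint C) := by
      rw [map_add, map_sub, adjoint_adjoint]
      exact ring_id2 B (adjoint B) C (adjoint C)
    have hdiag : ∀ X : H →L[ℂ] H, ‖X + X‖ = 2 * ‖X‖ := fun X => by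
      rw [← two_smul ℝ X, norm_smul]
      norm_num
    have hXnorm : 2 * ‖adjoint B * B + C * adjoint C‖
        ≤ ‖B + adjoint C‖ ^ 2 + ‖B - adjoint C‖ ^ 2 := by
      have h1 : ‖adjoint (B + adjoint C) * (B + adjoint C)‖ = ‖B + adjoint C‖ ^ 2 := by
        rw [← star_eq_adjoint (B + adjoint C), CStarRing.norm_star_mul_self, sq]
      have h2 : ‖adjoint (B - adjoint C) * (B - adjoint C)‖ = ‖B - adjoint C‖ ^ 2 := by
        rw [← star_eq_adjoint (B - adjoint C), CStarRing.norm_star_mul_self, sq]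
      have h3 := norm_add_le (adjoint (B + adjoint C) * (B + adjoint C))
        (adjoint (B - adjoint C) * (B - adjoint C))
      rw [← hXsum, hdiag, h1, h2] at h3
      linarith
    have hYnorm : 2 * ‖B * adjoint B + adjoint C * C‖
        ≤ ‖B + adjoint C‖ ^ 2 + ‖B - adjoint C‖ ^ 2 := by
      have h1 : ‖(B + adjoint C) * adjoint (B + adjoint C)‖ = ‖B + adjoint C‖ ^ 2 := by
        rw [← star_eq_adjoint (B + adjoint C), CStarRing.norm_self_mul_star, sq]
      have h2 : ‖(B - adjoint C) * adjoint (B - adjoint C)‖ = ‖B - adjoint C‖ ^ 2 := by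
        rw [← star_eq_adjoint (B - adjoint C), CStarRing.norm_self_mul_star, sq]
      have h3 := norm_add_le ((B + adjoint C) * adjoint (B + adjoint C))
        ((B - adjoint C) * adjoint (B - adjoint C))
      rw [← hYsum, hdiag, h1, h2] at h3
      linarith
    rw [hX, hY]
    have hmax : 2 * max ‖adjoint B * B + C * adjoint C‖ ‖B * adjoint B + adjoint C * C‖
        ≤ ‖B + adjoint C‖ ^ 2 + ‖B - adjoint C‖ ^ 2 := by
      rcases max_cases ‖adjoint B * B + C * adjoint C‖ ‖B * adjoint B + adjoint C * C‖ with
        ⟨h, _⟩ | ⟨h, _⟩ <;> rw [h] <;> linarith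
    rcases max_cases (‖B + adjoint C‖ ^ 2) (‖B - adjoint C‖ ^ 2) with ⟨h, h'⟩ | ⟨h, h'⟩ <;>
      rw [h]
    · have hqp : ‖B - adjoint C‖ ≤ ‖B + adjoint C‖ := by nlinarith
      nlinarith [mul_le_mul_of_nonneg_right hqp hb0]
    · have hpq : ‖B + adjoint C‖ ≤ ‖B - adjoint C‖ := by nlinarith
      nlinarith [mul_le_mul_of_nonneg_right hpq ha0]
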